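/- For a connected locally finite weighted graph (V, μ) and 1 < p < ∞ with conjugate exponent q, the graph is L^p-parabolic if and only if g_q(x, y) = ∞ for some (equivalently, all) x, y ∈ V. -/

import Mathlib

open scoped ENNReal

/-- Vertex weight `μ(x) = ∑_y μ_{xy}` of a weighted graph. -/
noncomputable def vertexWeight {V : Type*} (μ : V → V → ℝ≥0∞) (x : V) : ℝ≥0∞ := ∑' y, μ x y

/-- Transition kernel `P(x,y) = μ_{xy}/μ(x)` of the random walk. -/
noncomputable def transKer {V : Type*} (μ : V → V → ℝ≥0∞) (x y : V) : ℝ≥0∞ :=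
  μ x y / vertexWeight μ x

open Classical in
/-- Transition kernel of the walk killed on exiting `U`. -/
noncomputable def killedKer {V : Type*} (μ : V → V → ℝ≥0∞) (U : Set V) (x y : V) : ℝ≥0∞ :=
  if x ∈ U ∧ y ∈ U then transKer μ x y else 0

open Classical in
/-- `n`-step iterates `P^U_n` of the killed kernel, with `P^U_0 = I_U`. -/
noncomputable def killedKerN {V : Type*} (μ : V → V → ℝ≥0∞) (U : Set V) : ℕ → V → V → ℝ≥0∞
  | 0 => fun x y => if x = y ∧ x ∈ U then 1 else 0
  | n + 1 => fun x y => ∑' z, killedKer μ U x z * killedKerN μ U n z y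

/-- Killed Green function `g^U(x,y) = ∑_n P^U_n(x,y)/μ(y)`. -/
noncomputable def greenKilled {V : Type*} (μ : V → V → ℝ≥0∞) (U : Set V) (x y : V) : ℝ≥0∞ :=
  ∑' n, killedKerN μ U n x y / vertexWeight μ y

/-- Green function `g(x,y) = ∑_n pₙ(x,y)` of the graph. -/
noncomputable def green {V : Type*} (μ : V → V → ℝ≥0∞) (x y : V) : ℝ≥0∞ :=
  greenKilled μ Set.univ x y

/-- Killed Green operator `G^U f(x) = ∑_{y∈U} g^U(x,y) f(y) μ(y)`. -/
noncomputable def greenOp {V : Type*} (μ : V → V → ℝ≥0∞) (U : Set V) (f : V → ℝ≥0∞) (x : V) :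
    ℝ≥0∞ :=
  ∑' y, greenKilled μ U x y * f y * vertexWeight μ y

/-- The `L^q`-Green function `g_q(x,y) = ∑_z g(x,z) g(z,y)^{q-1} μ(z)`. -/
noncomputable def greenQ {V : Type*} (μ : V → V → ℝ≥0∞) (q : ℝ) (x y : V) : ℝ≥0∞ :=
  ∑' z, green μ x z * green μ z y ^ (q - 1) * vertexWeight μ z

/-- The `μ`-weighted `L^q(U)` norm. -/
noncomputable def lqNorm {V : Type*} (μ : V → V → ℝ≥0∞) (U : Set V) (q : ℝ) (h : V → ℝ≥0∞) :
    ℝ≥0∞ :=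
  (∑' x, U.indicator (fun x => h x ^ q * vertexWeight μ x) x) ^ (1 / q)

/-- The `L^p`-capacity `C_p(K,U)`:
`sup { ν(K)^p : ν = fμ, f ∈ ℓ⁺(K), ‖G^U f‖_{L^q(U)} ≤ 1 }`, `1/p + 1/q = 1`. -/
noncomputable def lpCap {V : Type*} (μ : V → V → ℝ≥0∞) (p q : ℝ) (K : Finset V) (U : Set V) :
    ℝ≥0∞ :=
  ⨆ f ∈ {f : V → ℝ≥0∞ | (∀ x, x ∉ K → f x = 0) ∧ lqNorm μ U q (greenOp μ U f) ≤ 1},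
    (∑ x ∈ K, f x * vertexWeight μ x) ^ p

/-- A weighted graph is locally finite if every vertex has finitely many neighbours. -/
def LocallyFinite' {V : Type*} (μ : V → V → ℝ≥0∞) : Prop :=
  ∀ x, (Function.support (μ x)).Finite

section Aux
open Classical
variable {V : Type*} (μ : V → V → ℝ≥0∞)

lemma killedKer_univ (x y : V) : killedKer μ Set.univ x y = transKer μ x y := by
  simp [killedKer]

lemma kkN_zero (x y : V) :
    killedKerN μ Set.univ 0 x y = if x = y then 1 else 0 := by
  simp [killedKerN]

lemma kkN_succ (n : ℕ) (x y : V) :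
    killedKerN μ Set.univ (n+1) x y = ∑' z, transKer μ x z * killedKerN μ Set.univ n z y := by
  simp [killedKerN, killedKer_univ]

lemma kkN_add (n m : ℕ) (x y : V) :
    killedKerN μ Set.univ (n + m) x y
      = ∑' z, killedKerN μ Set.univ n x z * killedKerN μ Set.univ m z y := by
  induction n generalizing x with
  | zero =>
    simp only [Nat.zero_add]
    rw [tsum_eq_single x]
    · rw [kkN_zero]; simp
    · intro z hz
      rw [kkN_zero, if_neg (Ne.symm hz)]
      simp
  | succ n ih =>
    have h1 : n + 1 + m = (n + m) + 1 := by ring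
    rw [h1, kkN_succ]
    simp only [ih]
    calc ∑' z, transKer μ x z * ∑' w, killedKerN μ Set.univ n z w * killedKerN μ Set.univ m w y
        = ∑' z, ∑' w, transKer μ x z * (killedKerN μ Set.univ n z w * killedKerN μ Set.univ m w y) := by
          simp [ENNReal.tsum_mul_left]
      _ = ∑' w, ∑' z, transKer μ x z * killedKerN μ Set.univ n z w * killedKerN μ Set.univ m w y := by
          rw [ENNReal.tsum_comm]; simp [mul_assoc]
      _ = ∑' w, (∑' z, transKer μ x z * killedKerN μ Set.univ n z w) * killedKerN μ Set.univ m w y := by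
          congr 1; ext w; rw [ENNReal.tsum_mul_right]
      _ = ∑' w, killedKerN μ Set.univ (n+1) x w * killedKerN μ Set.univ m w y := by
          simp [kkN_succ]

end Aux

section Aux2
open Classical
variable {V : Type*} {μ : V → V → ℝ≥0∞}

lemma transKer_sum (hpos : ∀ x, 0 < vertexWeight μ x) (hfin : ∀ x, vertexWeight μ x < ⊤)
    (x : V) : ∑' y, transKer μ x y = 1 := by
  unfold transKer
  simp only [div_eq_mul_inv]
  rw [ENNReal.tsum_mul_right]
  exact ENNReal.mul_inv_cancel (hpos x).ne' (hfin x).ne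

lemma kkN_le_one (hpos : ∀ x, 0 < vertexWeight μ x) (hfin : ∀ x, vertexWeight μ x < ⊤)
    (n : ℕ) (x y : V) : killedKerN μ Set.univ n x y ≤ 1 := by
  induction n generalizing x with
  | zero => rw [kkN_zero]; split <;> simp
  | succ n ih =>
    rw [kkN_succ]
    calc ∑' z, transKer μ x z * killedKerN μ Set.univ n z y
        ≤ ∑' z, transKer μ x z * 1 := ENNReal.tsum_le_tsum fun z => by
          exact mul_le_mul_right (ih z) _
      _ = 1 := by simpa using transKer_sum hpos hfin x

lemma kkN_succ' (n : ℕ) (x y : V) :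
    killedKerN μ Set.univ (n+1) x y = ∑' z, killedKerN μ Set.univ n x z * transKer μ z y := by
  have := kkN_add μ n 1 x y
  rw [this]
  congr 1; ext z
  congr 1
  rw [show (1:ℕ) = 0 + 1 from rfl, kkN_succ]
  rw [tsum_eq_single y]
  · rw [kkN_zero, if_pos rfl, mul_one]
  · intro w hw; rw [kkN_zero, if_neg hw, mul_zero]

lemma detailed_balance (hsym : ∀ x y, μ x y = μ y x)
    (hpos : ∀ x, 0 < vertexWeight μ x) (hfin : ∀ x, vertexWeight μ x < ⊤) (n : ℕ) (x y : V) :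
    vertexWeight μ x * killedKerN μ Set.univ n x y
      = vertexWeight μ y * killedKerN μ Set.univ n y x := by
  induction n generalizing x y with
  | zero =>
    rw [kkN_zero, kkN_zero]
    rcases eq_or_ne x y with h | h
    · subst h; rfl
    · rw [if_neg h, if_neg (Ne.symm h), mul_zero, mul_zero]
  | succ n ih =>
    have key : ∀ a b : V, vertexWeight μ a * transKer μ a b = vertexWeight μ b * transKer μ b a := by
      intro a b
      unfold transKer
      rw [ENNReal.mul_div_cancel (hpos a).ne' (hfin a).ne,
          ENNReal.mul_div_cancel (hpos b).ne' (hfin b).ne, hsym]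
    rw [kkN_succ, ENNReal.tsum_mul_left.symm]
    have h2 : ∀ z, vertexWeight μ x * (transKer μ x z * killedKerN μ Set.univ n z y)
        = (vertexWeight μ y * killedKerN μ Set.univ n y z) * transKer μ z x := by
      intro z
      rw [← mul_assoc, key x z, mul_assoc, mul_comm (transKer μ z x), ← mul_assoc, ih]
    calc ∑' z, vertexWeight μ x * (transKer μ x z * killedKerN μ Set.univ n z y)
        = ∑' z, (vertexWeight μ y * killedKerN μ Set.univ n y z) * transKer μ z x := tsum_congr h2
      _ = vertexWeight μ y * ∑' z, killedKerN μ Set.univ n y z * transKer μ z x := by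
          simp_rw [mul_assoc]; rw [ENNReal.tsum_mul_left]
      _ = vertexWeight μ y * killedKerN μ Set.univ (n+1) y x := by rw [← kkN_succ']

end Aux2

section Aux3
open Classical
variable {V : Type*} {μ : V → V → ℝ≥0∞}

lemma green_symm (hsym : ∀ x y, μ x y = μ y x)
    (hpos : ∀ x, 0 < vertexWeight μ x) (hfin : ∀ x, vertexWeight μ x < ⊤) (x y : V) :
    green μ x y = green μ y x := by
  unfold green greenKilled
  refine tsum_congr fun n => ?_
  have db := detailed_balance hsym hpos hfin n x y
  calc killedKerN μ Set.univ n x y / vertexWeight μ y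
      = vertexWeight μ x * killedKerN μ Set.univ n x y / (vertexWeight μ x * vertexWeight μ y) :=
        (ENNReal.mul_div_mul_left _ _ (hpos x).ne' (hfin x).ne).symm
    _ = vertexWeight μ y * killedKerN μ Set.univ n y x / (vertexWeight μ y * vertexWeight μ x) := by
        rw [db, mul_comm (vertexWeight μ x)]
    _ = killedKerN μ Set.univ n y x / vertexWeight μ x :=
        ENNReal.mul_div_mul_left _ _ (hpos y).ne' (hfin y).ne

lemma harnack (hpos : ∀ x, 0 < vertexWeight μ x) (hfin : ∀ x, vertexWeight μ x < ⊤)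
    (hconn : ∀ x y : V, ∃ n, 0 < killedKerN μ Set.univ n x y) (x y : V) :
    ∃ c : ℝ≥0∞, 0 < c ∧ c ≠ ⊤ ∧ ∀ z, c * green μ y z ≤ green μ x z := by
  obtain ⟨n, hn⟩ := hconn x y
  refine ⟨killedKerN μ Set.univ n x y, hn, ?_, fun z => ?_⟩
  · exact (lt_of_le_of_lt (kkN_le_one hpos hfin n x y) ENNReal.one_lt_top).ne
  · calc killedKerN μ Set.univ n x y * green μ y z
        = ∑' m, killedKerN μ Set.univ n x y * killedKerN μ Set.univ m y z / vertexWeight μ z := by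
          unfold green greenKilled
          rw [← ENNReal.tsum_mul_left]
          exact tsum_congr fun m => by rw [mul_div_assoc]
      _ ≤ ∑' m, killedKerN μ Set.univ (n + m) x z / vertexWeight μ z := by
          refine ENNReal.tsum_le_tsum fun m => ?_
          refine ENNReal.div_le_div_right ?_ _
          rw [kkN_add]
          exact ENNReal.le_tsum y
      _ ≤ ∑' m, killedKerN μ Set.univ m x z / vertexWeight μ z :=
          ENNReal.tsum_comp_le_tsum_of_injective (add_right_injective n) _
      _ = green μ x z := rfl

lemma mul_rpow_self {q : ℝ} (hq : 1 < q) (a : ℝ≥0∞) : a * a ^ (q - 1) = a ^ q := by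
  rcases eq_or_ne a 0 with rfl | h0
  · rw [ENNReal.zero_rpow_of_pos (by linarith), ENNReal.zero_rpow_of_pos (by linarith), mul_zero]
  rcases eq_or_ne a ⊤ with rfl | ht
  · rw [ENNReal.top_rpow_of_pos (by linarith), ENNReal.top_rpow_of_pos (by linarith)]; simp
  · conv_lhs => rw [show a * a ^ (q-1) = a ^ (1:ℝ) * a ^ (q-1) by rw [ENNReal.rpow_one]]
    rw [← ENNReal.rpow_add _ _ h0 ht]
    norm_num

end Aux3

section Aux4
open Classical
variable {V : Type*} {μ : V → V → ℝ≥0∞} {q : ℝ}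

/-- `Sg μ q x = ∑_z g(x,z)^q μ(z)`. -/
noncomputable def Sg (μ : V → V → ℝ≥0∞) (q : ℝ) (x : V) : ℝ≥0∞ :=
  ∑' z, green μ x z ^ q * vertexWeight μ z

lemma greenQ_eq (hsym : ∀ x y, μ x y = μ y x)
    (hpos : ∀ x, 0 < vertexWeight μ x) (hfin : ∀ x, vertexWeight μ x < ⊤) (x y : V) :
    greenQ μ q x y = ∑' z, green μ x z * green μ y z ^ (q - 1) * vertexWeight μ z := by
  unfold greenQ
  exact tsum_congr fun z => by rw [green_symm hsym hpos hfin z y]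

lemma greenQ_self (hq : 1 < q) (hsym : ∀ x y, μ x y = μ y x)
    (hpos : ∀ x, 0 < vertexWeight μ x) (hfin : ∀ x, vertexWeight μ x < ⊤) (x : V) :
    greenQ μ q x x = Sg μ q x := by
  rw [greenQ_eq hsym hpos hfin]
  exact tsum_congr fun z => by rw [mul_rpow_self hq]

lemma Sg_top_of_Sg_top (hq : 1 < q) (hpos : ∀ x, 0 < vertexWeight μ x)
    (hfin : ∀ x, vertexWeight μ x < ⊤)
    (hconn : ∀ x y : V, ∃ n, 0 < killedKerN μ Set.univ n x y) (x y : V)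
    (h : Sg μ q y = ⊤) : Sg μ q x = ⊤ := by
  obtain ⟨c, hc0, hct, hc⟩ := harnack hpos hfin hconn x y
  have key : c ^ q * Sg μ q y ≤ Sg μ q x := by
    unfold Sg
    rw [← ENNReal.tsum_mul_left]
    refine ENNReal.tsum_le_tsum fun z => ?_
    rw [← mul_assoc, ← ENNReal.mul_rpow_of_nonneg _ _ (by positivity)]
    exact mul_le_mul_left (ENNReal.rpow_le_rpow (hc z) (by positivity)) _
  rw [h, ENNReal.mul_top (ENNReal.rpow_pos hc0 hct).ne'] at key
  exact top_le_iff.mp key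

lemma greenQ_ge (hq : 1 < q) (hsym : ∀ x y, μ x y = μ y x)
    (hpos : ∀ x, 0 < vertexWeight μ x) (hfin : ∀ x, vertexWeight μ x < ⊤)
    (hconn : ∀ x y : V, ∃ n, 0 < killedKerN μ Set.univ n x y) (x y : V)
    (h : Sg μ q y = ⊤) : greenQ μ q x y = ⊤ := by
  obtain ⟨c, hc0, hct, hc⟩ := harnack hpos hfin hconn x y
  have key : c * Sg μ q y ≤ greenQ μ q x y := by
    rw [greenQ_eq hsym hpos hfin]
    unfold Sg
    rw [← ENNReal.tsum_mul_left]
    refine ENNReal.tsum_le_tsum fun z => ?_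
    calc c * (green μ y z ^ q * vertexWeight μ z)
        = (c * green μ y z) * green μ y z ^ (q-1) * vertexWeight μ z := by
          rw [← mul_rpow_self hq (green μ y z)]; ring
      _ ≤ green μ x z * green μ y z ^ (q-1) * vertexWeight μ z := by
          exact mul_le_mul_left (mul_le_mul_left (hc z) _) _
  rw [h, ENNReal.mul_top hc0.ne'] at key
  exact top_le_iff.mp key

lemma Sg_top_of_greenQ_top (hq : 1 < q) (hsym : ∀ x y, μ x y = μ y x)
    (hpos : ∀ x, 0 < vertexWeight μ x) (hfin : ∀ x, vertexWeight μ x < ⊤)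
    (hconn : ∀ x y : V, ∃ n, 0 < killedKerN μ Set.univ n x y) (x y : V)
    (h : greenQ μ q x y = ⊤) : Sg μ q y = ⊤ := by
  obtain ⟨c, hc0, hct, hc⟩ := harnack hpos hfin hconn y x
  have hxz : ∀ z, green μ x z ≤ c⁻¹ * green μ y z := fun z => by
    rw [← one_mul (green μ x z), ← ENNReal.inv_mul_cancel hc0.ne' hct, mul_assoc]
    exact mul_le_mul_right (hc z) _
  have key : greenQ μ q x y ≤ c⁻¹ * Sg μ q y := by
    rw [greenQ_eq hsym hpos hfin]
    unfold Sg
    rw [← ENNReal.tsum_mul_left]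
    refine ENNReal.tsum_le_tsum fun z => ?_
    calc green μ x z * green μ y z ^ (q-1) * vertexWeight μ z
        ≤ (c⁻¹ * green μ y z) * green μ y z ^ (q-1) * vertexWeight μ z :=
          mul_le_mul_left (mul_le_mul_left (hxz z) _) _
      _ = c⁻¹ * (green μ y z ^ q * vertexWeight μ z) := by
          rw [← mul_rpow_self hq (green μ y z)]; ring
  rw [h, top_le_iff] at key
  by_contra hS
  exact (ENNReal.mul_lt_top (by simpa using hc0) (lt_top_iff_ne_top.mpr hS)).ne key
end Aux4

section Aux5
open Classical
variable {V : Type*} {μ : V → V → ℝ≥0∞} {p q : ℝ}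

lemma cap_zero_of_Sg_top (hp : 0 < p) (hq : 0 < q)
    (hsym : ∀ x y, μ x y = μ y x)
    (hpos : ∀ x, 0 < vertexWeight μ x) (hfin : ∀ x, vertexWeight μ x < ⊤)
    (hS : ∀ x, Sg μ q x = ⊤) (K : Finset V) : lpCap μ p q K Set.univ = 0 := by
  refine le_antisymm ?_ zero_le
  refine iSup₂_le fun f hf => ?_
  obtain ⟨hsupp, hnorm⟩ := hf
  have hz : ∀ x ∈ K, f x = 0 := by
    intro x₀ _
    by_contra hfx
    have hbig : (∑' z, Set.univ.indicator
        (fun z => greenOp μ Set.univ f z ^ q * vertexWeight μ z) z) = ⊤ := by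
      simp only [Set.indicator_univ]
      have hle : (f x₀ * vertexWeight μ x₀) ^ q * Sg μ q x₀
          ≤ ∑' z, greenOp μ Set.univ f z ^ q * vertexWeight μ z := by
        unfold Sg
        rw [← ENNReal.tsum_mul_left]
        refine ENNReal.tsum_le_tsum fun z => ?_
        have h1 : green μ x₀ z * (f x₀ * vertexWeight μ x₀) ≤ greenOp μ Set.univ f z := by
          have := ENNReal.le_tsum (f := fun y => greenKilled μ Set.univ z y * f y * vertexWeight μ y) x₀
          calc green μ x₀ z * (f x₀ * vertexWeight μ x₀)
              = greenKilled μ Set.univ z x₀ * f x₀ * vertexWeight μ x₀ := by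
                rw [green_symm hsym hpos hfin x₀ z]; unfold green; ring
            _ ≤ greenOp μ Set.univ f z := this
        calc (f x₀ * vertexWeight μ x₀) ^ q * (green μ x₀ z ^ q * vertexWeight μ z)
            = (green μ x₀ z * (f x₀ * vertexWeight μ x₀)) ^ q * vertexWeight μ z := by
              rw [ENNReal.mul_rpow_of_nonneg (green μ x₀ z) (f x₀ * vertexWeight μ x₀) hq.le]; ring
          _ ≤ greenOp μ Set.univ f z ^ q * vertexWeight μ z :=
              mul_le_mul_left (ENNReal.rpow_le_rpow h1 hq.le) _
      rw [hS x₀] at hle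
      have hne : (f x₀ * vertexWeight μ x₀) ^ q ≠ 0 := by
        intro h
        rcases ENNReal.rpow_eq_zero_iff.mp h with ⟨h1, _⟩ | ⟨_, h2⟩
        · exact (mul_ne_zero hfx (hpos x₀).ne') h1
        · linarith
      rw [ENNReal.mul_top hne, top_le_iff] at hle
      exact hle
    rw [lqNorm, hbig, ENNReal.top_rpow_of_pos (by positivity)] at hnorm
    exact absurd hnorm (by simp)
  have : ∑ x ∈ K, f x * vertexWeight μ x = 0 :=
    Finset.sum_eq_zero fun x hx => by rw [hz x hx, zero_mul]
  rw [this, ENNReal.zero_rpow_of_pos hp]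

set_option maxHeartbeats 1000000 in
lemma cap_singleton_pos (hp : 0 < p) (hq : 0 < q)
    (hsym : ∀ x y, μ x y = μ y x)
    (hpos : ∀ x, 0 < vertexWeight μ x) (hfin : ∀ x, vertexWeight μ x < ⊤)
    (x : V) (hS : Sg μ q x ≠ ⊤) : lpCap μ p q {x} Set.univ ≠ 0 := by
  set a : ℝ≥0∞ := vertexWeight μ x * (Sg μ q x ^ (1/q) + 1) with ha
  have hane : a ≠ 0 := mul_ne_zero (hpos x).ne' (by simp)
  have hatop : a ≠ ⊤ := ENNReal.mul_ne_top (hfin x).ne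
    (ENNReal.add_ne_top.mpr ⟨(ENNReal.rpow_lt_top_of_nonneg (by positivity) hS).ne, ENNReal.one_ne_top⟩)
  set t : ℝ≥0∞ := a⁻¹ with ht
  have ht0 : t ≠ 0 := ENNReal.inv_ne_zero.mpr hatop
  have httop : t ≠ ⊤ := ENNReal.inv_ne_top.mpr hane
  set f : V → ℝ≥0∞ := fun y => if y = x then t else 0 with hfdef
  have hGop : ∀ z, greenOp μ Set.univ f z = green μ x z * (t * vertexWeight μ x) := by
    intro z
    unfold greenOp
    rw [tsum_eq_single x]
    · have hfx : f x = t := if_pos rfl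
      rw [hfx, green_symm hsym hpos hfin x z]; unfold green; ring
    · intro y hy; rw [hfdef]; simp only [if_neg hy, mul_zero, zero_mul]
  have hnorm : lqNorm μ Set.univ q (greenOp μ Set.univ f) ≤ 1 := by
    unfold lqNorm
    simp only [Set.indicator_univ]
    have h1 : ∑' z, greenOp μ Set.univ f z ^ q * vertexWeight μ z
        = (t * vertexWeight μ x) ^ q * Sg μ q x := by
      unfold Sg
      rw [← ENNReal.tsum_mul_left]
      refine tsum_congr fun z => ?_
      rw [hGop z, ENNReal.mul_rpow_of_nonneg _ _ hq.le]; ring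
    have hq' : (0:ℝ) ≤ 1/q := by positivity
    have hqq : q * (1/q) = 1 := mul_one_div_cancel hq.ne'
    rw [h1, ENNReal.mul_rpow_of_nonneg _ _ hq', ← ENNReal.rpow_mul, hqq, ENNReal.rpow_one]
    calc t * vertexWeight μ x * Sg μ q x ^ (1/q)
        ≤ t * (vertexWeight μ x * (Sg μ q x ^ (1/q) + 1)) := by
          rw [mul_assoc]
          exact mul_le_mul_right (mul_le_mul_right (le_add_of_nonneg_right zero_le) _) _
      _ = 1 := by rw [← ha, ht, ENNReal.inv_mul_cancel hane hatop]
  have hmem : f ∈ {f : V → ℝ≥0∞ |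
      (∀ y, y ∉ ({x} : Finset V) → f y = 0) ∧ lqNorm μ Set.univ q (greenOp μ Set.univ f) ≤ 1} := by
    refine ⟨fun y hy => ?_, hnorm⟩
    rw [hfdef]; simp only [Finset.mem_singleton] at hy; simp [hy]
  have hle : (∑ y ∈ ({x} : Finset V), f y * vertexWeight μ y) ^ p ≤ lpCap μ p q {x} Set.univ := by
    unfold lpCap
    exact le_iSup₂ (f := fun (g : V → ℝ≥0∞) (_ : g ∈ {f : V → ℝ≥0∞ |
      (∀ y, y ∉ ({x} : Finset V) → f y = 0) ∧ lqNorm μ Set.univ q (greenOp μ Set.univ f) ≤ 1}) =>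
      (∑ y ∈ ({x} : Finset V), g y * vertexWeight μ y) ^ p) f hmem
  have hval : (∑ y ∈ ({x} : Finset V), f y * vertexWeight μ y) ^ p ≠ 0 := by
    have hfx : f x = t := if_pos rfl
    rw [Finset.sum_singleton, hfx]
    intro h
    rcases ENNReal.rpow_eq_zero_iff.mp h with ⟨h1, _⟩ | ⟨_, h2⟩
    · exact (mul_ne_zero ht0 (hpos x).ne') h1
    · linarith
  intro h0
  exact hval (le_antisymm (h0 ▸ hle) zero_le)
end Aux5


/-- for `1 < p < ∞` with conjugate `q`, an infinite connected locally
finite weighted graph is `L^p`-parabolic (all `L^p`-capacities of finite sets vanish)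
iff `g_q(x,y) = ∞` for some, equivalently all, `x, y ∈ V`. -/
theorem lpParabolic_iff_greenQ_infinite {V : Type*} [Infinite V]
    (μ : V → V → ℝ≥0∞)
    (hsym : ∀ x y, μ x y = μ y x)
    (hloc : LocallyFinite' μ)
    (hpos : ∀ x, 0 < vertexWeight μ x)
    (hfin : ∀ x, vertexWeight μ x < ⊤)
    (hconn : ∀ x y : V, ∃ n, 0 < killedKerN μ Set.univ n x y)
    (p q : ℝ) (hp : 1 < p) (hpq : 1 / p + 1 / q = 1) :
    ((∀ K : Finset V, lpCap μ p q K Set.univ = 0) ↔ ∃ x y : V, greenQ μ q x y = ⊤) ∧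
    ((∀ K : Finset V, lpCap μ p q K Set.univ = 0) ↔ ∀ x y : V, greenQ μ q x y = ⊤) := by
  have hp0 : 0 < p := lt_trans one_pos hp
  have h1p : 1/p < 1 := by rw [div_lt_one hp0]; exact hp
  have h1p0 : 0 < 1/p := by positivity
  have hqinv : 1/q = 1 - 1/p := by linarith
  have hqinv0 : 0 < 1/q := by rw [hqinv]; linarith
  have hq0 : 0 < q := one_div_pos.mp hqinv0
  have hqinv1 : 1/q < 1 := by rw [hqinv]; linarith
  have hq1 : 1 < q := (div_lt_one hq0).mp hqinv1
  have hAS : (∀ K : Finset V, lpCap μ p q K Set.univ = 0) ↔ ∀ x, Sg μ q x = ⊤ := by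
    constructor
    · intro hA x
      by_contra h
      exact cap_singleton_pos hp0 hq0 hsym hpos hfin x h (hA {x})
    · intro hS K
      exact cap_zero_of_Sg_top hp0 hq0 hsym hpos hfin hS K
  have hES : (∃ x y : V, greenQ μ q x y = ⊤) ↔ ∀ x, Sg μ q x = ⊤ := by
    constructor
    · rintro ⟨x, y, h⟩ z
      exact Sg_top_of_Sg_top hq1 hpos hfin hconn z y
        (Sg_top_of_greenQ_top hq1 hsym hpos hfin hconn x y h)
    · intro hS
      obtain ⟨x⟩ := (inferInstance : Infinite V).nonempty
      exact ⟨x, x, by rw [greenQ_self hq1 hsym hpos hfin]; exact hS x⟩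
  have hUS : (∀ x y : V, greenQ μ q x y = ⊤) ↔ ∀ x, Sg μ q x = ⊤ := by
    constructor
    · intro hU x
      rw [← greenQ_self hq1 hsym hpos hfin]
      exact hU x x
    · intro hS x y
      exact greenQ_ge hq1 hsym hpos hfin hconn x y (hS y)
  exact ⟨hAS.trans hES.symm, hAS.trans hUS.symm⟩
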